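/- Assume L(ε) stabilizes at k ≥ 0. Then for every l ≥ 2 and every 1 ≤ i ≤ k+1: E_{i,k+1+l} = e_{i,k+2}∘S̄_{k+1+l}; i.e., the first k+1 components of the columns E_{k+2}, E_{k+3}, … differ only by composition on the right with S̄_{k+2}, S̄_{k+3}, …. -/

import Mathlib

lemma sum_Icc_bot {X : Type*} [AddCommMonoid X] {a b : ℕ} (h : a ≤ b) (f : ℕ → X) :
    ∑ x ∈ Finset.Icc a b, f x = f a + ∑ x ∈ Finset.Icc (a+1) b, f x := by
  rw [show Finset.Icc a b = insert a (Finset.Icc (a+1) b) by ext; simp; omega,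
    Finset.sum_insert (by simp)]

section Main
variable {𝕂 : Type*} [RCLike 𝕂] {B B' : Type*} [AddCommGroup B] [Module 𝕂 B]
  [AddCommGroup B'] [Module 𝕂 B']
variable (L : ℕ → B →ₗ[𝕂] B') (Sb S : ℕ → B →ₗ[𝕂] B')
  (N Nc : ℕ → Submodule 𝕂 B) (R Rc : ℕ → Submodule 𝕂 B')
  (P : ℕ → B' →ₗ[𝕂] B') (T : ℕ → B' →ₗ[𝕂] B) (E M : ℕ → ℕ → B →ₗ[𝕂] B)
  (hN0 : N 0 = ⊤) (hRc0 : Rc 0 = ⊤)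
  (hSb1 : Sb 1 = L 0)
  (hSbrec : ∀ k, 1 ≤ k → Sb (k + 1) = ∑ i ∈ Finset.Icc 1 k, (L i).comp (M i k))
  (hSdef : ∀ k, S (k + 1) = Sb (k + 1) - ∑ i ∈ Finset.Icc 1 k, (P i).comp (Sb (k + 1)))
  (hNdef : ∀ k, N (k + 1) = LinearMap.ker (S (k + 1)) ⊓ N k)
  (hRdef : ∀ k, R (k + 1) = Submodule.map (S (k + 1)) (N k))
  (hNcompl : ∀ k, Disjoint (Nc (k + 1)) (N (k + 1)) ∧ Nc (k + 1) ⊔ N (k + 1) = N k)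
  (hRcompl : ∀ k, Disjoint (R (k + 1)) (Rc (k + 1)) ∧ R (k + 1) ⊔ Rc (k + 1) = Rc k)
  (hPrange : ∀ i, 1 ≤ i → LinearMap.range (P i) ≤ R i)
  (hPid : ∀ i, 1 ≤ i → ∀ y ∈ R i, P i y = y)
  (hPzeroRc : ∀ i, 1 ≤ i → ∀ y ∈ Rc i, P i y = 0)
  (hPzeroR : ∀ i j, 1 ≤ j → j < i → ∀ y ∈ R j, P i y = 0)
  (hTrange : ∀ i, 1 ≤ i → ∀ y, T i y ∈ Nc i)
  (hST : ∀ i, 1 ≤ i → ∀ y, S i (T i y) = P i y)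
  (hE11 : E 1 1 = LinearMap.id)
  (hEdiag : ∀ k, E (k + 1) (k + 1) = LinearMap.id)
  (hErec : ∀ k i, 1 ≤ i → i ≤ k →
    E i (k + 1) = -((T i).comp (∑ v ∈ Finset.Icc (i + 1) (k + 1), (Sb v).comp (E v (k + 1)))))
  (hM11 : M 1 1 = LinearMap.id)
  (hM1 : ∀ k, 1 ≤ k → M 1 (k + 1) = E 1 (k + 1))
  (hMrec : ∀ k a, 2 ≤ a → a ≤ k + 1 →
    M a (k + 1) = ∑ b ∈ Finset.Icc (a - 1) k, (M (a - 1) b).comp (E (b + 1) (k + 1)))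

include hSdef in
lemma hS_eq : ∀ m, 1 ≤ m → ∀ y, S m y = Sb m y - ∑ i ∈ Finset.Icc 1 (m-1), P i (Sb m y) := by
  intro m hm y
  obtain ⟨k, rfl⟩ : ∃ k, m = k + 1 := ⟨m-1, by omega⟩
  simp only [hSdef k, Nat.add_sub_cancel_left, LinearMap.sub_apply, LinearMap.sum_apply,
    LinearMap.comp_apply]
  congr 1

include hNdef in
lemma N_anti : ∀ i j : ℕ, i ≤ j → N j ≤ N i := by
  intro i j hij
  induction j with
  | zero => simp_all
  | succ n ih =>
    rcases Nat.lt_or_ge i (n+1) with h | h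
    · exact le_trans (by rw [hNdef n]; exact inf_le_right) (ih (by omega))
    · have : i = n + 1 := by omega
      subst this; exact le_rfl

include hNdef in
lemma N_le_ker : ∀ i j : ℕ, 1 ≤ i → i ≤ j → N j ≤ LinearMap.ker (S i) := by
  intro i j h1 hij
  refine le_trans (N_anti S N hNdef i j hij) ?_
  obtain ⟨t, rfl⟩ : ∃ t, i = t + 1 := ⟨i-1, by omega⟩
  rw [hNdef t]; exact inf_le_left

include hNcompl in
lemma Nc_le : ∀ k, Nc (k+1) ≤ N k := by
  intro k
  rw [← (hNcompl k).2]; exact le_sup_left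

include hRcompl in
lemma Rc_anti : ∀ i j : ℕ, i ≤ j → Rc j ≤ Rc i := by
  intro i j hij
  induction j with
  | zero => simp_all
  | succ n ih =>
    rcases Nat.lt_or_ge i (n+1) with h | h
    · exact le_trans (by rw [← (hRcompl n).2]; exact le_sup_right) (ih (by omega))
    · have : i = n + 1 := by omega
      subst this; exact le_rfl

include hRcompl in
lemma R_le_Rc : ∀ i j : ℕ, i < j → R j ≤ Rc i := by
  intro i j hij
  obtain ⟨t, rfl⟩ : ∃ t, j = t + 1 := ⟨j-1, by omega⟩
  refine le_trans (le_trans ?_ ((hRcompl t).2.le)) (Rc_anti R Rc hRcompl i t (by omega))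
  exact le_sup_left

include hRcompl hPid hPzeroRc hPzeroR in
lemma P_on_R : ∀ i t : ℕ, 1 ≤ i → 1 ≤ t → ∀ y ∈ R t, P i y = if i = t then y else 0 := by
  intro i t hi ht y hy
  rcases lt_trichotomy i t with h | h | h
  · rw [if_neg (by omega)]
    exact hPzeroRc i hi y (R_le_Rc R Rc hRcompl i t h hy)
  · subst h; rw [if_pos rfl]; exact hPid i hi y hy
  · rw [if_neg (by omega)]; exact hPzeroR i t ht h y hy

include hSdef hST hEdiag hErec in
lemma lemA1 : ∀ m, 1 ≤ m → ∀ x : B,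
    ∑ v ∈ Finset.Icc 1 m, Sb v (E v m x) = S m x := by
  intro m hm x
  set G : ℕ → B' := fun j => ∑ v ∈ Finset.Icc j m, Sb v (E v m x) with hG
  have aux : ∀ d j, j = m - d → 1 ≤ j →
      G j - ∑ i ∈ Finset.Icc 1 (j-1), P i (G j) = S m x := by
    intro d
    induction d with
    | zero =>
      intro j hj _
      have hjm : j = m := by omega
      subst hjm
      have hGm : G j = Sb j x := by
        have hE : E j j = LinearMap.id := by
          have := hEdiag (j-1); rwa [show j - 1 + 1 = j by omega] at this
        simp [hG, Finset.Icc_self, hE]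
      rw [hGm, (hS_eq Sb S P hSdef j hm x).symm]
    | succ d ih =>
      intro j hj hj1
      obtain ⟨j', rfl⟩ : ∃ j', j = j' + 1 := ⟨j - 1, by omega⟩
      have hjm : j' + 1 ≤ m - 1 := by omega
      have IH' : G (j' + 2) - ∑ i ∈ Finset.Icc 1 (j'+1), P i (G (j'+2)) = S m x := by
        have := ih (j' + 2) (by omega) (by omega)
        simpa using this
      have hEj : E (j'+1) m x = -(T (j'+1) (G (j'+2))) := by
        have h := hErec (m-1) (j'+1) (by omega) (by omega)
        rw [show m - 1 + 1 = m by omega] at h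
        rw [h]
        simp [hG, LinearMap.sum_apply]
      have hGj : G (j'+1) = -(Sb (j'+1) (T (j'+1) (G (j'+2)))) + G (j'+2) := by
        rw [hG]
        show (∑ v ∈ Finset.Icc (j'+1) m, Sb v (E v m x)) = _
        rw [sum_Icc_bot (show j'+1 ≤ m by omega), hEj, map_neg]
      have key : Sb (j'+1) (T (j'+1) (G (j'+2)))
          - ∑ i ∈ Finset.Icc 1 j', P i (Sb (j'+1) (T (j'+1) (G (j'+2))))
          = P (j'+1) (G (j'+2)) := by
        have h1 := hS_eq Sb S P hSdef (j'+1) (by omega) (T (j'+1) (G (j'+2)))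
        have h2 := hST (j'+1) (by omega) (G (j'+2))
        simp only [Nat.add_sub_cancel] at h1
        rw [← h1, h2]
      calc G (j'+1) - ∑ i ∈ Finset.Icc 1 (j'+1-1), P i (G (j'+1))
          = (G (j'+2) - ∑ i ∈ Finset.Icc 1 j', P i (G (j'+2)))
            - (Sb (j'+1) (T (j'+1) (G (j'+2)))
               - ∑ i ∈ Finset.Icc 1 j', P i (Sb (j'+1) (T (j'+1) (G (j'+2))))) := by
            simp only [Nat.add_sub_cancel, hGj, map_add, map_neg, Finset.sum_add_distrib,
              Finset.sum_neg_distrib]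
            abel
        _ = G (j'+2) - (∑ i ∈ Finset.Icc 1 j', P i (G (j'+2)) + P (j'+1) (G (j'+2))) := by
            rw [key]; abel
        _ = G (j'+2) - ∑ i ∈ Finset.Icc 1 (j'+1), P i (G (j'+2)) := by
            rw [Finset.sum_Icc_succ_top (by omega : 1 ≤ j'+1)]
        _ = S m x := IH'
  have := aux (m-1) 1 (by omega) le_rfl
  simpa using this

include hSb1 hSbrec hSdef hNdef hST hTrange hNcompl hEdiag hErec hM11 hM1 hMrec in
lemma lemA : ∀ m, 1 ≤ m → ∀ a, 1 ≤ a → a ≤ m → ∀ x ∈ N (m - a + 1),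
    ∑ i ∈ Finset.range (m - a + 1), L i (M (a + i) m x) = 0 := by
  intro m
  induction m using Nat.strong_induction_on with
  | _ m ih =>
  intro hm a ha ham x hx
  rcases eq_or_lt_of_le ha with ha1 | ha2
  · -- a = 1
    subst ha1
    rw [show m - 1 + 1 = m by omega] at hx ⊢
    have hxker : S m x = 0 := N_le_ker S N hNdef m m hm le_rfl hx
    rcases eq_or_lt_of_le hm with hm1 | hm2
    · -- m = 1
      subst hm1
      simp only [Finset.range_one, Finset.sum_singleton, hM11, LinearMap.id_coe, id_eq]
      have : S 1 = Sb 1 := by simpa using hSdef 0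
      rw [← hSb1, ← this, hxker]
    · -- m ≥ 2
      obtain ⟨m', rfl⟩ : ∃ m', m = m' + 1 := ⟨m - 1, by omega⟩
      have hm' : 1 ≤ m' := by omega
      set f : ℕ → B' := fun i => L i (M (1+i) (m'+1) x) with hf
      have hsum : ∑ i ∈ Finset.range (m'+1), L i (M (1+i) (m'+1) x)
          = (∑ i ∈ Finset.range m', f (i+1)) + f 0 := by
        rw [Finset.sum_range_succ']
      have claim1 : ∑ i ∈ Finset.range m', f (i+1) = ∑ i ∈ Finset.Icc 1 m', f i := by
        rw [← Finset.Ico_add_one_right_eq_Icc, Finset.sum_Ico_eq_sum_range]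
        exact Finset.sum_congr (by norm_num) (fun i _ => by rw [Nat.add_comm])
      have claim2 : ∀ i ∈ Finset.Icc 1 m',
          f i = ∑ b ∈ Finset.Icc i m', L i (M i b (E (b+1) (m'+1) x)) := by
        intro i hi
        simp only [Finset.mem_Icc] at hi
        rw [hf]
        simp only [hMrec m' (1+i) (by omega) (by omega), Nat.add_sub_cancel_left,
          show 1 + i - 1 = i by omega, LinearMap.sum_apply, LinearMap.comp_apply, map_sum]
      have claim3 : ∑ i ∈ Finset.Icc 1 m', ∑ b ∈ Finset.Icc i m', L i (M i b (E (b+1) (m'+1) x))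
          = ∑ b ∈ Finset.Icc 1 m', ∑ i ∈ Finset.Icc 1 b, L i (M i b (E (b+1) (m'+1) x)) :=
        Finset.sum_comm' (by intro i b; simp only [Finset.mem_Icc]; omega)
      have claim4 : ∀ b ∈ Finset.Icc 1 m',
          ∑ i ∈ Finset.Icc 1 b, L i (M i b (E (b+1) (m'+1) x))
            = Sb (b+1) (E (b+1) (m'+1) x) := by
        intro b hb
        simp only [Finset.mem_Icc] at hb
        rw [hSbrec b hb.1]
        simp [LinearMap.sum_apply]
      have claim5 : ∑ b ∈ Finset.Icc 1 m', Sb (b+1) (E (b+1) (m'+1) x)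
          = ∑ v ∈ Finset.Icc 2 (m'+1), Sb v (E v (m'+1) x) := by
        rw [← Finset.map_add_right_Icc 1 m' 1, Finset.sum_map]
        rfl
      have hf0 : f 0 = Sb 1 (E 1 (m'+1) x) := by
        rw [hf]; simp only [Nat.add_zero]; rw [hM1 m' hm', hSb1]
      have hfin : Sb 1 (E 1 (m'+1) x) + ∑ v ∈ Finset.Icc (1+1) (m'+1), Sb v (E v (m'+1) x)
          = 0 := by
        have h0 := sum_Icc_bot (show 1 ≤ m'+1 by omega) (fun v => Sb v (E v (m'+1) x))
        rw [← h0, lemA1 Sb S P T E hSdef hST hEdiag hErec (m'+1) (by omega) x, hxker]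
      rw [hsum, claim1, Finset.sum_congr rfl claim2, claim3, Finset.sum_congr rfl claim4,
        claim5, hf0, add_comm]
      exact hfin
  · -- a ≥ 2
    have hm2 : 2 ≤ m := le_trans ha2 ham
    have step1 : ∀ i ∈ Finset.range (m - a + 1),
        L i (M (a+i) m x)
          = ∑ b ∈ Finset.Icc ((a-1)+i) (m-1), L i (M ((a-1)+i) b (E (b+1) m x)) := by
      intro i hi
      simp only [Finset.mem_range] at hi
      have h := hMrec (m-1) (a+i) (by omega) (by omega)
      rw [show m - 1 + 1 = m by omega] at h
      rw [h, show a + i - 1 = (a-1) + i by omega]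
      simp [LinearMap.sum_apply]
    have step2 : ∑ i ∈ Finset.range (m - a + 1),
          ∑ b ∈ Finset.Icc ((a-1)+i) (m-1), L i (M ((a-1)+i) b (E (b+1) m x))
        = ∑ b ∈ Finset.Icc (a-1) (m-1),
            ∑ i ∈ Finset.range (b - (a-1) + 1), L i (M ((a-1)+i) b (E (b+1) m x)) :=
      Finset.sum_comm' (by
        intro i b
        simp only [Finset.mem_range, Finset.mem_Icc]
        omega)
    have step3 : ∀ b ∈ Finset.Icc (a-1) (m-1),
        ∑ i ∈ Finset.range (b - (a-1) + 1), L i (M ((a-1)+i) b (E (b+1) m x)) = 0 := by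
      intro b hb
      simp only [Finset.mem_Icc] at hb
      have hy : E (b+1) m x ∈ N (b - (a-1) + 1) := by
        rcases eq_or_lt_of_le (show b + 1 ≤ m by omega) with hbm | hbm
        · have hE : E (b+1) m = LinearMap.id := by
            rw [← hbm]; exact hEdiag b
          rw [hE]
          simpa [show b - (a-1) + 1 = m - a + 1 by omega] using hx
        · have h := hErec (m-1) (b+1) (by omega) (by omega)
          rw [show m - 1 + 1 = m by omega] at h
          have : E (b+1) m x ∈ Nc (b+1) := by
            rw [h]
            simp only [LinearMap.neg_apply, LinearMap.comp_apply]
            exact neg_mem (hTrange (b+1) (by omega) _)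
          exact N_anti S N hNdef (b - (a-1) + 1) b (by omega)
            (Nc_le N Nc hNcompl b this)
      exact ih b (by omega) (by omega) (a-1) (by omega) (by omega) _ hy
    rw [Finset.sum_congr rfl step1, step2, Finset.sum_congr rfl step3, Finset.sum_const_zero]

include hM11 hMrec hEdiag in
lemma M_diag : ∀ m, 1 ≤ m → M m m = LinearMap.id := by
  intro m hm
  induction m with
  | zero => omega
  | succ n ihn =>
    rcases Nat.eq_or_lt_of_le hm with h1 | h2
    · obtain rfl : n = 0 := by omega
      exact hM11
    · have hn : 1 ≤ n := by omega
      rw [hMrec n (n+1) (by omega) le_rfl]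
      simp only [Nat.add_sub_cancel, Finset.Icc_self, Finset.sum_singleton, hEdiag n,
        LinearMap.comp_id, ihn hn]

include hSdef in
lemma hS1 : S 1 = Sb 1 := by simpa using hSdef 0

lemma sum_shift {X : Type*} [AddCommMonoid X] (n : ℕ) (f : ℕ → X) :
    ∑ i ∈ Finset.range n, f (i+1) = ∑ i ∈ Finset.Icc 1 n, f i := by
  rw [← Finset.Ico_add_one_right_eq_Icc, Finset.sum_Ico_eq_sum_range]
  exact Finset.sum_congr (by norm_num) (fun i _ => by rw [Nat.add_comm])

include hN0 hSb1 hSbrec hSdef hNdef hRdef hPrange hPid hPzeroRc hPzeroR hST hTrange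
  hNcompl hRcompl hEdiag hErec hM11 hM1 hMrec in
lemma lemB : ∀ n, 1 ≤ n → ∀ b : ℕ → B,
    (∀ l, l + 1 ≤ n → ∑ i ∈ Finset.range (l + 1), L i (b (l - i)) = 0) →
    b 0 ∈ N n ∧
    ∃ c : ℕ → B', (∀ t, 1 ≤ t → t ≤ n + 1 → c t ∈ R t) ∧
      ∑ i ∈ Finset.Icc 1 n, L i (b (n - i)) = ∑ t ∈ Finset.Icc 1 (n+1), c t := by
  intro n
  induction n using Nat.strong_induction_on with
  | _ n ih =>
  intro hn b hb
  -- membership of L 0 z in R 1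
  have hR1 : ∀ z : B, L 0 z ∈ R 1 := by
    intro z
    rw [hRdef 0, hN0]
    exact ⟨z, trivial, by rw [hS1 Sb S P hSdef, hSb1]⟩
  -- canonical chains: for x0 ∈ N ν, the M-chain is a Jordan chain
  have hcanon : ∀ ν, 1 ≤ ν → ∀ x0 ∈ N ν, ∀ l, l + 1 ≤ ν →
      ∑ i ∈ Finset.range (l+1), L i (M (ν - (l - i)) ν x0) = 0 := by
    intro ν hν x0 hx0 l hl
    have hmem : x0 ∈ N (ν - (ν - l) + 1) :=
      N_anti S N hNdef _ ν (by omega) hx0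
    have hA := lemA L Sb S N Nc P T E M hSb1 hSbrec hSdef hNdef hNcompl hTrange hST
      hEdiag hErec hM11 hM1 hMrec ν hν (ν - l) (by omega) (by omega) x0 hmem
    rw [show ν - (ν - l) + 1 = l + 1 by omega] at hA
    rw [← hA]
    refine Finset.sum_congr rfl (fun i hi => ?_)
    simp only [Finset.mem_range] at hi
    rw [show ν - (l - i) = (ν - l) + i by omega]
  -- root-zero chains have their next coefficient in R 1 + ... + R ν
  have root0 : ∀ ν, 1 ≤ ν → ν ≤ n → ∀ d : ℕ → B, d 0 = 0 →
      (∀ l, l + 1 ≤ ν → ∑ i ∈ Finset.range (l + 1), L i (d (l - i)) = 0) →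
      ∃ c' : ℕ → B', (∀ t, 1 ≤ t → t ≤ ν → c' t ∈ R t) ∧
        ∑ i ∈ Finset.Icc 1 ν, L i (d (ν - i)) = ∑ t ∈ Finset.Icc 1 ν, c' t := by
    intro ν hν hνn d hd0 hdchain
    rcases Nat.eq_or_lt_of_le hν with h1 | h2
    · obtain rfl : ν = 1 := h1.symm
      refine ⟨0, by simp, ?_⟩
      simp [hd0]
    · -- ν ≥ 2 : shift the chain
      have huchain : ∀ l, l + 1 ≤ ν - 1 →
          ∑ i ∈ Finset.range (l + 1), L i (d ((l - i) + 1)) = 0 := by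
        intro l hl
        have h := hdchain (l+1) (by omega)
        rw [Finset.sum_range_succ] at h
        rw [show l + 1 - (l + 1) = 0 by omega, hd0, map_zero, add_zero] at h
        rw [← h]
        exact Finset.sum_congr rfl (fun i hi => by
          simp only [Finset.mem_range] at hi
          rw [show l + 1 - i = (l - i) + 1 by omega])
      obtain ⟨-, c', hc'mem, hc'⟩ := ih (ν - 1) (by omega) (by omega)
        (fun j => d (j + 1)) huchain
      rw [show ν - 1 + 1 = ν by omega] at hc' hc'mem
      refine ⟨c', hc'mem, ?_⟩
      rw [← hc']
      obtain ⟨ν', rfl⟩ : ∃ ν', ν = ν' + 1 := ⟨ν - 1, by omega⟩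
      rw [Finset.sum_Icc_succ_top (by omega : 1 ≤ ν' + 1)]
      rw [show ν' + 1 - (ν' + 1) = 0 by omega, hd0, map_zero, add_zero]
      simp only [Nat.add_sub_cancel]
      exact Finset.sum_congr rfl (fun i hi => by
        simp only [Finset.mem_Icc] at hi
        rw [show ν' + 1 - i = (ν' - i) + 1 by omega])
  -- part 1 : b 0 ∈ N n
  have part1 : b 0 ∈ N n := by
    rcases Nat.eq_or_lt_of_le hn with h1 | h2
    · -- n = 1
      obtain rfl : n = 1 := h1.symm
      have h0 := hb 0 (by omega)
      simp only [zero_add, Finset.range_one, Finset.sum_singleton, Nat.sub_zero] at h0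
      have hker : S 1 (b 0) = 0 := by rw [hS1 Sb S P hSdef, hSb1]; exact h0
      rw [hNdef 0, hN0]
      exact Submodule.mem_inf.mpr ⟨LinearMap.mem_ker.mpr hker, trivial⟩
    · -- n = n' + 1, n' ≥ 1
      obtain ⟨n', rfl⟩ : ∃ n', n = n' + 1 := ⟨n - 1, by omega⟩
      have hn' : 1 ≤ n' := by omega
      have hbtr : ∀ l, l + 1 ≤ n' → ∑ i ∈ Finset.range (l + 1), L i (b (l - i)) = 0 :=
        fun l hl => hb l (by omega)
      have hx0 : b 0 ∈ N n' := (ih n' (by omega) hn' b hbtr).1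
      set x0 := b 0 with hx0def
      set d : ℕ → B := fun j => b j - M (n' - j) n' x0 with hd
      have hd0 : d 0 = 0 := by
        rw [hd]
        simp only [Nat.sub_zero]
        rw [M_diag E M hEdiag hM11 hMrec n' hn']
        simp [hx0def]
      have hdchain : ∀ l, l + 1 ≤ n' →
          ∑ i ∈ Finset.range (l + 1), L i (d (l - i)) = 0 := by
        intro l hl
        have h1 := hbtr l hl
        have h2 := hcanon n' hn' x0 hx0 l hl
        simp only [hd, map_sub]
        rw [Finset.sum_sub_distrib, h1, h2, sub_zero]
      obtain ⟨c', hc'mem, hc'⟩ := root0 n' hn' (by omega) d hd0 hdchain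
      -- top chain condition
      have htop3 : (∑ i ∈ Finset.Icc 1 n', L i (b (n' - i))) + L 0 (b n') = 0 := by
        have h := hb n' le_rfl
        rw [Finset.sum_range_succ'] at h
        have hsh : ∑ i ∈ Finset.range n', L (i+1) (b (n' - (i+1)))
            = ∑ i ∈ Finset.Icc 1 n', L i (b (n' - i)) :=
          sum_shift n' (fun i => L i (b (n' - i)))
        rw [hsh] at h
        simpa using h
      have hsplit : (∑ i ∈ Finset.Icc 1 n', L i (b (n' - i)))
          = Sb (n'+1) x0 + ∑ i ∈ Finset.Icc 1 n', L i (d (n' - i)) := by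
        have h1 : ∀ i ∈ Finset.Icc 1 n',
            L i (b (n' - i)) = L i (M i n' x0) + L i (d (n' - i)) := by
          intro i hi
          simp only [Finset.mem_Icc] at hi
          have : b (n' - i) = M i n' x0 + d (n' - i) := by
            rw [hd]
            simp only
            rw [show n' - (n' - i) = i by omega]
            abel
          rw [this, map_add]
        rw [Finset.sum_congr rfl h1, Finset.sum_add_distrib]
        congr 1
        rw [hSbrec n' hn']
        simp [LinearMap.sum_apply]
      have hy : Sb (n'+1) x0 = -(L 0 (b n') + ∑ t ∈ Finset.Icc 1 n', c' t) := by
        have h : Sb (n'+1) x0 + (L 0 (b n') + ∑ t ∈ Finset.Icc 1 n', c' t) = 0 := by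
          rw [← hc']
          rw [hsplit] at htop3
          rw [add_comm (L 0 (b n')), ← add_assoc]
          exact htop3
        exact eq_neg_of_add_eq_zero_left h
      have hPsum : ∑ i ∈ Finset.Icc 1 n', P i (L 0 (b n') + ∑ t ∈ Finset.Icc 1 n', c' t)
          = L 0 (b n') + ∑ t ∈ Finset.Icc 1 n', c' t := by
        have e1 : ∑ i ∈ Finset.Icc 1 n', P i (L 0 (b n')) = L 0 (b n') := by
          rw [Finset.sum_congr rfl (fun i hi => P_on_R R Rc P hRcompl hPid hPzeroRc hPzeroR
            i 1 (by simp only [Finset.mem_Icc] at hi; omega) le_rfl _ (hR1 (b n')))]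
          rw [Finset.sum_ite_eq' (Finset.Icc 1 n') 1 (fun _ => L 0 (b n'))]
          simp [hn']
        have e2 : ∑ i ∈ Finset.Icc 1 n', ∑ t ∈ Finset.Icc 1 n', P i (c' t)
            = ∑ t ∈ Finset.Icc 1 n', c' t := by
          rw [Finset.sum_comm]
          refine Finset.sum_congr rfl (fun t ht => ?_)
          simp only [Finset.mem_Icc] at ht
          rw [Finset.sum_congr rfl (fun i hi => P_on_R R Rc P hRcompl hPid hPzeroRc hPzeroR
            i t (by simp only [Finset.mem_Icc] at hi; omega) ht.1 _ (hc'mem t ht.1 ht.2))]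
          rw [Finset.sum_ite_eq' (Finset.Icc 1 n') t (fun _ => c' t)]
          simp [Finset.mem_Icc, ht.1, ht.2]
        simp only [map_add, map_sum, Finset.sum_add_distrib, e1, e2]
      have hSn : S (n'+1) x0 = 0 := by
        rw [hS_eq Sb S P hSdef (n'+1) (by omega) x0, hy]
        simp only [Nat.add_sub_cancel, map_neg, Finset.sum_neg_distrib, sub_neg_eq_add]
        rw [hPsum]
        abel
      rw [hNdef n']
      exact ⟨hSn, hx0⟩
  refine ⟨part1, ?_⟩
  -- part 2 : representation of the next coefficient
  set x0 := b 0 with hx0def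
  set d : ℕ → B := fun j => b j - M (n - j) n x0 with hd
  have hd0 : d 0 = 0 := by
    rw [hd]
    simp only [Nat.sub_zero]
    rw [M_diag E M hEdiag hM11 hMrec n hn]
    simp [hx0def]
  have hdchain : ∀ l, l + 1 ≤ n →
      ∑ i ∈ Finset.range (l + 1), L i (d (l - i)) = 0 := by
    intro l hl
    have h1 := hb l hl
    have h2 := hcanon n hn x0 part1 l hl
    simp only [hd, map_sub]
    rw [Finset.sum_sub_distrib, h1, h2, sub_zero]
  obtain ⟨c', hc'mem, hc'⟩ := root0 n hn le_rfl d hd0 hdchain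
  have hsplit : (∑ i ∈ Finset.Icc 1 n, L i (b (n - i)))
      = Sb (n+1) x0 + ∑ i ∈ Finset.Icc 1 n, L i (d (n - i)) := by
    have h1 : ∀ i ∈ Finset.Icc 1 n,
        L i (b (n - i)) = L i (M i n x0) + L i (d (n - i)) := by
      intro i hi
      simp only [Finset.mem_Icc] at hi
      have : b (n - i) = M i n x0 + d (n - i) := by
        rw [hd]
        simp only
        rw [show n - (n - i) = i by omega]
        abel
      rw [this, map_add]
    rw [Finset.sum_congr rfl h1, Finset.sum_add_distrib]
    congr 1
    rw [hSbrec n hn]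
    simp [LinearMap.sum_apply]
  have hSb_dec : Sb (n+1) x0
      = S (n+1) x0 + ∑ i ∈ Finset.Icc 1 n, P i (Sb (n+1) x0) := by
    rw [hS_eq Sb S P hSdef (n+1) (by omega) x0]
    simp only [Nat.add_sub_cancel]
    abel
  set cfin : ℕ → B' := fun t => if t = n + 1 then S (n+1) x0 else P t (Sb (n+1) x0) + c' t
    with hcfin
  have hval : ∀ t ∈ Finset.Icc 1 n, cfin t = P t (Sb (n+1) x0) + c' t := by
    intro t ht
    simp only [Finset.mem_Icc] at ht
    simp only [hcfin]
    rw [if_neg (by omega)]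
  have hval2 : cfin (n+1) = S (n+1) x0 := by simp [hcfin]
  refine ⟨cfin, ?_, ?_⟩
  · intro t ht1 ht2
    rcases Nat.eq_or_lt_of_le ht2 with h1 | h2
    · simp only [hcfin]
      rw [if_pos h1, h1, hRdef n]
      exact ⟨x0, part1, rfl⟩
    · simp only [hcfin]
      rw [if_neg (by omega)]
      exact add_mem (hPrange t ht1 ⟨Sb (n+1) x0, rfl⟩) (hc'mem t ht1 (by omega))
  · rw [hsplit, hc', hSb_dec, Finset.sum_Icc_succ_top (by omega : 1 ≤ n + 1), hval2,
      Finset.sum_congr rfl hval, Finset.sum_add_distrib]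
    abel

include hSb1 hSbrec hSdef hNdef hNcompl hTrange hST hEdiag hErec hM11 hM1 hMrec in
lemma lemCanon : ∀ ν, 1 ≤ ν → ∀ x0 ∈ N ν, ∀ l, l + 1 ≤ ν →
    ∑ i ∈ Finset.range (l+1), L i (M (ν - (l - i)) ν x0) = 0 := by
  intro ν hν x0 hx0 l hl
  have hmem : x0 ∈ N (ν - (ν - l) + 1) :=
    N_anti S N hNdef _ ν (by omega) hx0
  have hA := lemA L Sb S N Nc P T E M hSb1 hSbrec hSdef hNdef hNcompl hTrange hST
    hEdiag hErec hM11 hM1 hMrec ν hν (ν - l) (by omega) (by omega) x0 hmem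
  rw [show ν - (ν - l) + 1 = l + 1 by omega] at hA
  rw [← hA]
  refine Finset.sum_congr rfl (fun i hi => ?_)
  simp only [Finset.mem_range] at hi
  rw [show ν - (l - i) = (ν - l) + i by omega]

variable (e : ℕ → ℕ → B' →ₗ[𝕂] B)
  (heBase : ∀ m, 2 ≤ m → e (m - 1) m = -(T (m - 1)))
  (heStep : ∀ m i, 1 ≤ i → i + 2 ≤ m →
    e i m = (e i (m - 1)).comp ((LinearMap.id : B' →ₗ[𝕂] B') - (Sb (m - 1)).comp (T (m - 1))))

include heBase heStep in
lemma eLem : ∀ m, 2 ≤ m → ∀ i, 1 ≤ i → i ≤ m - 1 → ∀ y : B',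
    e i m y = -(T i (y + ∑ v ∈ Finset.Icc (i+1) (m-1), Sb v (e v m y))) := by
  intro m hm
  induction m, hm using Nat.le_induction with
  | base =>
    intro i hi1 him y
    obtain rfl : i = 1 := by omega
    have h := heBase 2 le_rfl
    norm_num at h ⊢
    rw [h]
    simp
  | succ m hm ihm =>
    intro i hi1 him y
    obtain ⟨m'', rfl⟩ : ∃ m'', m = m'' + 1 := ⟨m - 1, by omega⟩
    simp only [Nat.add_sub_cancel] at him ⊢
    rcases Nat.eq_or_lt_of_le him with h1 | h2
    · -- i = m'' + 1 : top case
      subst h1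
      have h := heBase (m''+2) (by omega)
      rw [show m'' + 2 - 1 = m'' + 1 by omega] at h
      rw [h, Finset.Icc_eq_empty (by omega : ¬ m'' + 1 + 1 ≤ m'' + 1)]
      simp
    · -- i ≤ m''
      have hstep := heStep (m'' + 2) i hi1 (by omega)
      rw [show m'' + 2 - 1 = m'' + 1 by omega] at hstep
      set w : B' := y - Sb (m''+1) (T (m''+1) y) with hwdef
      have happly : ∀ u, 1 ≤ u → u ≤ m'' → e u (m''+2) y = e u (m''+1) w := by
        intro u hu1 hu2
        have hs := heStep (m'' + 2) u hu1 (by omega)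
        rw [show m'' + 2 - 1 = m'' + 1 by omega] at hs
        rw [hs]
        simp [LinearMap.comp_apply, LinearMap.sub_apply, hwdef]
      have hbasecase : e (m''+1) (m''+2) y = -(T (m''+1) y) := by
        have h := heBase (m''+2) (by omega)
        rw [show m'' + 2 - 1 = m'' + 1 by omega] at h
        rw [h]
        simp
      have IH := ihm i hi1 (by omega : i ≤ m'' + 1 - 1) w
      simp only [Nat.add_sub_cancel] at IH
      have h1 : ∑ v ∈ Finset.Icc (i+1) (m''+1), Sb v (e v (m''+2) y)
          = (∑ v ∈ Finset.Icc (i+1) m'', Sb v (e v (m''+1) w))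
            + Sb (m''+1) (-(T (m''+1) y)) := by
        rw [Finset.sum_Icc_succ_top (by omega : i+1 ≤ m''+1), hbasecase]
        congr 1
        refine Finset.sum_congr rfl (fun v hv => ?_)
        simp only [Finset.mem_Icc] at hv
        rw [happly v (by omega) (by omega)]
      have harg : w + ∑ v ∈ Finset.Icc (i+1) m'', Sb v (e v (m''+1) w)
          = y + ((∑ v ∈ Finset.Icc (i+1) m'', Sb v (e v (m''+1) w))
            + Sb (m''+1) (-(T (m''+1) y))) := by
        rw [hwdef, map_neg]
        abel
      calc e i (m''+2) y = e i (m''+1) w := by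
            rw [hstep]; simp [LinearMap.comp_apply, LinearMap.sub_apply, hwdef]
        _ = -(T i (w + ∑ v ∈ Finset.Icc (i+1) m'', Sb v (e v (m''+1) w))) := IH
        _ = -(T i (y + ∑ v ∈ Finset.Icc (i+1) (m''+1), Sb v (e v (m''+2) y))) := by
            rw [h1, ← harg]

end Main




theorem stmt_12
    {𝕂 : Type*} [RCLike 𝕂]
    {B B' : Type*} [AddCommGroup B] [Module 𝕂 B]
    [AddCommGroup B'] [Module 𝕂 B']
    (L : ℕ → B →ₗ[𝕂] B')
    (Sb S : ℕ → B →ₗ[𝕂] B')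
    (N Nc : ℕ → Submodule 𝕂 B)
    (R Rc : ℕ → Submodule 𝕂 B')
    (P : ℕ → B' →ₗ[𝕂] B')
    (T : ℕ → B' →ₗ[𝕂] B)
    (E M : ℕ → ℕ → B →ₗ[𝕂] B)
    (hL : ∃ i, L i ≠ 0)
    (hN0 : N 0 = ⊤) (hRc0 : Rc 0 = ⊤)
    (hSb1 : Sb 1 = L 0)
    (hSbrec : ∀ k, 1 ≤ k → Sb (k + 1) = ∑ i ∈ Finset.Icc 1 k, (L i).comp (M i k))
    (hSdef : ∀ k, S (k + 1) = Sb (k + 1) - ∑ i ∈ Finset.Icc 1 k, (P i).comp (Sb (k + 1)))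
    (hNdef : ∀ k, N (k + 1) = LinearMap.ker (S (k + 1)) ⊓ N k)
    (hRdef : ∀ k, R (k + 1) = Submodule.map (S (k + 1)) (N k))
    (hNcompl : ∀ k, Disjoint (Nc (k + 1)) (N (k + 1)) ∧ Nc (k + 1) ⊔ N (k + 1) = N k)
    (hRcompl : ∀ k, Disjoint (R (k + 1)) (Rc (k + 1)) ∧ R (k + 1) ⊔ Rc (k + 1) = Rc k)
    (hPrange : ∀ i, 1 ≤ i → LinearMap.range (P i) ≤ R i)
    (hPid : ∀ i, 1 ≤ i → ∀ y ∈ R i, P i y = y)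
    (hPzeroRc : ∀ i, 1 ≤ i → ∀ y ∈ Rc i, P i y = 0)
    (hPzeroR : ∀ i j, 1 ≤ j → j < i → ∀ y ∈ R j, P i y = 0)
    (hTrange : ∀ i, 1 ≤ i → ∀ y, T i y ∈ Nc i)
    (hTS : ∀ i, 1 ≤ i → ∀ x ∈ Nc i, T i (S i x) = x)
    (hST : ∀ i, 1 ≤ i → ∀ y, S i (T i y) = P i y)
    (hE11 : E 1 1 = LinearMap.id)
    (hEdiag : ∀ k, E (k + 1) (k + 1) = LinearMap.id)
    (hErec : ∀ k i, 1 ≤ i → i ≤ k →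
      E i (k + 1) = -((T i).comp (∑ v ∈ Finset.Icc (i + 1) (k + 1), (Sb v).comp (E v (k + 1)))))
    (hM11 : M 1 1 = LinearMap.id)
    (hM1 : ∀ k, 1 ≤ k → M 1 (k + 1) = E 1 (k + 1))
    (hMrec : ∀ k a, 2 ≤ a → a ≤ k + 1 →
      M a (k + 1) = ∑ b ∈ Finset.Icc (a - 1) k, (M (a - 1) b).comp (E (b + 1) (k + 1)))
    (e : ℕ → ℕ → B' →ₗ[𝕂] B)
    (heBase : ∀ m, 2 ≤ m → e (m - 1) m = -(T (m - 1)))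
    (heStep : ∀ m i, 1 ≤ i → i + 2 ≤ m →
      e i m = (e i (m - 1)).comp ((LinearMap.id : B' →ₗ[𝕂] B') - (Sb (m - 1)).comp (T (m - 1))))
    (rank : B → ℕ∞)
    (hrank : ∀ b0 : B, rank b0 = sSup {x : ℕ∞ | ∃ m : ℕ, 1 ≤ m ∧
      (∃ b : ℕ → B, b 0 = b0 ∧
        ∀ l, l + 1 ≤ m → ∑ i ∈ Finset.range (l + 1), L i (b (l - i)) = 0) ∧ x = (m : ℕ∞)})
    (k : ℕ)
    (hstab : (∀ b0 : B, rank b0 ≤ (k : ℕ∞) ∨ rank b0 = ⊤) ∧ ∃ b0 : B, rank b0 = (k : ℕ∞))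
    :
    ∀ l, 2 ≤ l → ∀ i, 1 ≤ i → i ≤ k + 1 →
      E i (k + 1 + l) = (e i (k + 2)).comp (Sb (k + 1 + l)) := by
  obtain ⟨hstab1, -⟩ := hstab
  -- Step 1: the kernels stabilize
  have hNstab : ∀ j, k + 1 ≤ j → N j ≤ N (j + 1) := by
    intro j hj x hx
    have hj1 : 1 ≤ j := by omega
    set bfun : ℕ → B := fun t => if t < j then M (j - t) j x else 0 with hbfun
    have hchain : ∀ l', l' + 1 ≤ j →
        ∑ i ∈ Finset.range (l' + 1), L i (bfun (l' - i)) = 0 := by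
      intro l' hl'
      have hc := lemCanon (L := L) (Sb := Sb) (S := S) (N := N) (Nc := Nc) (P := P)
        (T := T) (E := E) (M := M) (hSb1 := hSb1) (hSbrec := hSbrec) (hSdef := hSdef)
        (hNdef := hNdef) (hNcompl := hNcompl) (hTrange := hTrange) (hST := hST)
        (hEdiag := hEdiag) (hErec := hErec) (hM11 := hM11) (hM1 := hM1) (hMrec := hMrec)
        j hj1 x hx l' hl'
      rw [← hc]
      refine Finset.sum_congr rfl (fun i hi => ?_)
      simp only [Finset.mem_range] at hi
      simp only [hbfun]
      rw [if_pos (by omega : l' - i < j)]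
    have hb0 : bfun 0 = x := by
      simp only [hbfun]
      rw [if_pos (by omega : 0 < j), Nat.sub_zero,
        M_diag (E := E) (M := M) (hEdiag := hEdiag) (hM11 := hM11) (hMrec := hMrec) j hj1]
      rfl
    have hle : (j : ℕ∞) ≤ rank x := by
      rw [hrank x]
      exact le_sSup ⟨j, hj1, ⟨bfun, hb0, hchain⟩, rfl⟩
    have hrtop : rank x = ⊤ := by
      rcases hstab1 x with h | h
      · exfalso
        have h2 := le_trans hle h
        rw [Nat.cast_le] at h2
        omega
      · exact h
    have hex : ∃ s ∈ {xx : ℕ∞ | ∃ m : ℕ, 1 ≤ m ∧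
        (∃ b : ℕ → B, b 0 = x ∧
          ∀ l, l + 1 ≤ m → ∑ i ∈ Finset.range (l + 1), L i (b (l - i)) = 0) ∧
        xx = (m : ℕ∞)}, (j : ℕ∞) < s := by
      by_contra hcon
      push_neg at hcon
      have hle2 : rank x ≤ (j : ℕ∞) := by
        rw [hrank x]
        exact sSup_le hcon
      rw [hrtop] at hle2
      exact ENat.coe_ne_top j (top_le_iff.mp hle2)
    obtain ⟨s, hs, hjs⟩ := hex
    obtain ⟨mm, hmm1, ⟨bb, hbb0, hbbchain⟩, rfl⟩ := hs
    have hjm : j + 1 ≤ mm := by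
      rw [Nat.cast_lt] at hjs
      omega
    have hres := (lemB (L := L) (Sb := Sb) (S := S) (N := N) (Nc := Nc) (R := R) (Rc := Rc)
      (P := P) (T := T) (E := E) (M := M) (hN0 := hN0) (hSb1 := hSb1) (hSbrec := hSbrec)
      (hSdef := hSdef) (hNdef := hNdef) (hRdef := hRdef) (hNcompl := hNcompl)
      (hRcompl := hRcompl) (hPrange := hPrange) (hPid := hPid) (hPzeroRc := hPzeroRc)
      (hPzeroR := hPzeroR) (hTrange := hTrange) (hST := hST) (hEdiag := hEdiag)
      (hErec := hErec) (hM11 := hM11) (hM1 := hM1) (hMrec := hMrec)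
      (j+1) (by omega) bb (fun l' hl' => hbbchain l' (by omega))).1
    rwa [hbb0] at hres
  have hNeq : ∀ j, k + 1 ≤ j → N (j + 1) = N j := fun j hj =>
    le_antisymm (by rw [hNdef j]; exact inf_le_right) (hNstab j hj)
  -- Step 2: T and P vanish beyond k+1
  have hT0 : ∀ v, k + 2 ≤ v → ∀ y, T v y = 0 := by
    intro v hv y
    obtain ⟨w, rfl⟩ : ∃ w, v = w + 1 := ⟨v - 1, by omega⟩
    have h1 : Nc (w+1) ≤ N (w+1) := by
      rw [hNeq w (by omega)]
      exact Nc_le (N := N) (Nc := Nc) (hNcompl := hNcompl) w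
    have h2 : Nc (w+1) = ⊥ := (hNcompl w).1.eq_bot_of_le h1
    have h3 := hTrange (w+1) (by omega) y
    rw [h2] at h3
    simpa using h3
  intro l hl i hi1 hik
  set m := k + 1 + l with hmdef
  have hm3 : k + 3 ≤ m := by omega
  have hEzero : ∀ v, k + 2 ≤ v → v ≤ m - 1 → ∀ x, E v m x = 0 := by
    intro v hv1 hv2 x
    have h := hErec (m-1) v (by omega) (by omega)
    rw [show m - 1 + 1 = m by omega] at h
    rw [h]
    simp [hT0 v hv1]
  have hEmm : ∀ x : B, E m m x = x := by
    intro x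
    have h := hEdiag (m-1)
    rw [show m - 1 + 1 = m by omega] at h
    rw [h]
    rfl
  have main : ∀ t, ∀ i', 1 ≤ i' → i' ≤ k + 1 → k + 1 - i' ≤ t → ∀ x,
      E i' m x = e i' (k+2) (Sb m x) := by
    intro t
    induction t using Nat.strong_induction_on with
    | _ t iht =>
    intro i' hi1' hik' hti' x
    have h := hErec (m-1) i' hi1' (by omega)
    rw [show m - 1 + 1 = m by omega] at h
    have hEx : E i' m x = -(T i' (∑ v ∈ Finset.Icc (i'+1) m, Sb v (E v m x))) := by
      rw [h]
      simp [LinearMap.sum_apply]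
    have hsplit : ∑ v ∈ Finset.Icc (i'+1) m, Sb v (E v m x)
        = (∑ v ∈ Finset.Icc (i'+1) (k+1), Sb v (E v m x))
          + ∑ v ∈ Finset.Icc (k+2) m, Sb v (E v m x) := by
      have hun : Finset.Icc (i'+1) m = Finset.Icc (i'+1) (k+1) ∪ Finset.Icc (k+2) m := by
        ext v
        simp only [Finset.mem_Icc, Finset.mem_union]
        omega
      have hdisj : Disjoint (Finset.Icc (i'+1) (k+1)) (Finset.Icc (k+2) m) := by
        rw [Finset.disjoint_left]
        intro v hv1 hv2
        simp only [Finset.mem_Icc] at hv1 hv2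
        omega
      rw [hun, Finset.sum_union hdisj]
    have hsecond : ∑ v ∈ Finset.Icc (k+2) m, Sb v (E v m x) = Sb m x := by
      have hite : ∀ v ∈ Finset.Icc (k+2) m, Sb v (E v m x) = if v = m then Sb m x else 0 := by
        intro v hv
        simp only [Finset.mem_Icc] at hv
        by_cases hvm : v = m
        · subst hvm
          rw [if_pos rfl, hEmm]
        · rw [if_neg hvm, hEzero v (by omega) (by omega), map_zero]
      rw [Finset.sum_congr rfl hite, Finset.sum_ite_eq' (Finset.Icc (k+2) m) m (fun _ => Sb m x)]
      rw [if_pos (Finset.mem_Icc.mpr ⟨by omega, le_rfl⟩)]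
    have hfirst : ∑ v ∈ Finset.Icc (i'+1) (k+1), Sb v (E v m x)
        = ∑ v ∈ Finset.Icc (i'+1) (k+1), Sb v (e v (k+2) (Sb m x)) := by
      refine Finset.sum_congr rfl (fun v hv => ?_)
      simp only [Finset.mem_Icc] at hv
      rw [iht (k+1-v) (by omega) v (by omega) (by omega) (by omega) x]
    have helem := eLem (Sb := Sb) (T := T) (e := e) (heBase := heBase) (heStep := heStep)
      (k+2) (by omega) i' hi1' (by omega : i' ≤ k + 2 - 1) (Sb m x)
    rw [show k + 2 - 1 = k + 1 by omega] at helem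
    rw [hEx, hsplit, hsecond, hfirst, helem, add_comm (Sb m x)]
  refine LinearMap.ext (fun x => ?_)
  have hfin := main (k+1) i hi1 hik (by omega) x
  simpa [LinearMap.comp_apply] using hfin
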